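/- Let L be a first-order language with no function or constant symbols and finitely many relation symbols, and let K be a Ramsey class of finite L-structures (closed under isomorphism and induced substructures, with the joint embedding property, satisfying the Ramsey property for colorings of embeddings). Then every structure in K is rigid: for each A ∈ K, the only L-automorphism of A is the identity. -/

import Mathlib

open FirstOrder FirstOrder.Language CategoryTheory

universe u v w

/-- A class `K` of structures is a Ramsey class if for all `A, B ∈ K` there is `C ∈ K` such
that every `2`-colouring of the embeddings `A ↪ C` admits a monochromatic embedding `B ↪ C`. -/
def IsRamseyClass {L : FirstOrder.Language.{u, v}} (K : Set (Bundled.{w} L.Structure)) : Prop :=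
  ∀ A ∈ K, ∀ B ∈ K, ∃ C ∈ K, ∀ c : (A ↪[L] C) → Bool,
    ∃ g : B ↪[L] C, ∀ f₁ f₂ : A ↪[L] C,
      Set.range ⇑f₁ ⊆ Set.range ⇑g → Set.range ⇑f₂ ⊆ Set.range ⇑g → c f₁ = c f₂

/-- Every integer power of (the underlying permutation of) an `L`-automorphism is again the
underlying function of an `L`-automorphism. -/
lemma zpow_realizable {L : FirstOrder.Language.{u, v}} {A : Type*} [L.Structure A]
    (e : A ≃[L] A) (k : ℤ) : ∃ τ : A ≃[L] A, ⇑τ = ⇑(e.toEquiv ^ k) := by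
  induction k using Int.induction_on with
  | zero => exact ⟨FirstOrder.Language.Equiv.refl L A, by ext a; simp⟩
  | succ k ih =>
    obtain ⟨τ, hτ⟩ := ih
    refine ⟨τ.comp e, funext fun a => ?_⟩
    have h2 : (e.toEquiv ^ ((k : ℤ) + 1)) a = (e.toEquiv ^ (k : ℤ)) (e.toEquiv a) := by
      rw [zpow_add_one]
      simp [Equiv.Perm.mul_apply]
    have h3 : (τ.comp e) a = τ (e a) := rfl
    rw [h3, h2, hτ]
    rfl
  | pred k ih =>
    obtain ⟨τ, hτ⟩ := ih
    refine ⟨τ.comp e.symm, funext fun a => ?_⟩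
    have h2 : (e.toEquiv ^ (-(k : ℤ) - 1)) a = (e.toEquiv ^ (-(k : ℤ))) (e.toEquiv⁻¹ a) := by
      rw [zpow_sub_one]
      simp [Equiv.Perm.mul_apply]
    have h3 : (τ.comp e.symm) a = τ (e.symm a) := rfl
    rw [h3, h2, hτ]
    rfl

/-- Every structure in a Ramsey class of finite structures over a finite
relational language (closed under isomorphism and induced substructures, with the joint
embedding property) is rigid. -/
theorem stmt15 {L : FirstOrder.Language.{u, v}} [L.IsRelational]
    [Finite (Σ n, L.Relations n)]
    (K : Set (Bundled.{w} L.Structure))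
    (hiso : ∀ M N : Bundled.{w} L.Structure, Nonempty (M ≃[L] N) → (M ∈ K ↔ N ∈ K))
    (hher : FirstOrder.Language.Hereditary K)
    (hjep : FirstOrder.Language.JointEmbedding K)
    (hfin : ∀ A ∈ K, Finite A)
    (hRamsey : IsRamseyClass K) :
    ∀ A ∈ K, ∀ e : A ≃[L] A, ∀ x : A, e x = x := by
  classical
  intro A hA e x
  by_contra hex
  obtain ⟨C, hC, hram⟩ := hRamsey A hA A hA
  have : Finite C := hfin C hC
  have : Countable C := Finite.to_countable
  obtain ⟨ι, hι⟩ := Countable.exists_injective_nat C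
  set σ : Equiv.Perm A := e.toEquiv with hσ
  -- Setoid on functions `A → ℕ`: same orbit under precomposition with powers of `σ`.
  let s : Setoid (A → ℕ) :=
    { r := fun j j' => ∃ k : ℤ, j' = j ∘ ⇑(σ ^ k)
      iseqv := by
        constructor
        · intro j
          exact ⟨0, by ext a; simp⟩
        · rintro j j' ⟨k, rfl⟩
          refine ⟨-k, ?_⟩
          ext a
          simp only [Function.comp_apply, ← Equiv.Perm.mul_apply, ← zpow_add, add_neg_cancel, zpow_zero, Equiv.Perm.one_apply]
        · rintro j j' j'' ⟨k, rfl⟩ ⟨k', rfl⟩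
          refine ⟨k + k', ?_⟩
          ext a
          simp [← Equiv.Perm.mul_apply, ← zpow_add] }
  -- the colouring: colour `f` `true` iff `ι ∘ f` is the chosen orbit representative
  let c : (A ↪[L] C) → Bool := fun f =>
    decide ((ι ∘ ⇑f) = (Quotient.mk s (ι ∘ ⇑f)).out)
  obtain ⟨g, hmono⟩ := hram c
  -- for each `k : ℤ`, the embedding `g ∘ σ^k`
  have key : ∀ k : ℤ, ∃ f : A ↪[L] C, ⇑f = ⇑g ∘ ⇑(σ ^ k) ∧ Set.range ⇑f ⊆ Set.range ⇑g := by
    intro k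
    obtain ⟨τ, hτ⟩ := zpow_realizable e k
    refine ⟨g.comp τ.toEmbedding, ?_, ?_⟩
    · ext a; simp [hτ, hσ]
    · rintro _ ⟨a, rfl⟩; exact ⟨_, rfl⟩
  set j : A → ℕ := ι ∘ ⇑g with hj
  -- all functions `j ∘ σ^k` are in the same class, hence get the same colour
  have hclass : ∀ k : ℤ, (Quotient.mk s (j ∘ ⇑(σ ^ k))) = Quotient.mk s j := by
    intro k
    have hr : s.r j (j ∘ ⇑(σ ^ k)) := ⟨k, rfl⟩
    exact (Quotient.sound hr).symm
  have hcol : ∀ k : ℤ, decide ((j ∘ ⇑(σ ^ k)) = (Quotient.mk s j).out) = c g := by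
    intro k
    obtain ⟨f, hf, hfr⟩ := key k
    have h1 : c f = c g := hmono f g hfr (subset_refl _)
    have h2 : ι ∘ ⇑f = j ∘ ⇑(σ ^ k) := by rw [hf, hj]; rfl
    rw [← h1]
    simp only [c, h2, hclass k]
  -- the chosen representative is in the orbit, so some `j ∘ σ^k` is coloured `true`
  have hrep : ∃ k : ℤ, (Quotient.mk s j).out = j ∘ ⇑(σ ^ k) := by
    have h : s.r j ((Quotient.mk s j).out) := Setoid.symm (Quotient.mk_out (s := s) j)
    exact h
  obtain ⟨k₀, hk₀⟩ := hrep
  have htrue : c g = true := by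
    rw [← hcol k₀, ← hk₀]
    simp
  -- hence both `j` and `j ∘ σ` equal the representative
  have h0 : j = (Quotient.mk s j).out := by
    have := hcol 0
    rw [htrue, decide_eq_true_eq] at this
    have hid : j ∘ ⇑(σ ^ (0 : ℤ)) = j := by ext a; simp
    rwa [hid] at this
  have h1 : j ∘ ⇑σ = (Quotient.mk s j).out := by
    have := hcol 1
    rw [htrue, decide_eq_true_eq] at this
    rwa [zpow_one] at this
  have hje : j (σ x) = j x := by
    conv_rhs => rw [h0]
    rw [← h1]; rfl
  have : σ x = x := g.injective (hι hje)
  exact hex this
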